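/- Let t ↦ (X(t), y(t)) be a differentiable trajectory of the gradient descent-ascent dynamics, and let (x*, y*) be an interior Nash equilibrium with value u*. Define D₂(X, y) = Σ_j (1/2)‖x_j − x*‖² + (1/2)‖y − y*‖². Then at every time t, d/dt D₂(X(t), y(t)) = −dyᵀ X(t)ᵀ U dy, where dy = y(t) − y*. -/

import Mathlib

/-- Orthogonality: if the weights sum to zero, a constant offset drops out. -/
lemma sum_mul_sub_const {n : ℕ} (a b : Fin n → ℝ) (c : ℝ) (h : ∑ i, a i = 0) :
    ∑ i, a i * (b i - c) = ∑ i, a i * b i := by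
  simp [mul_sub, Finset.sum_sub_distrib, ← Finset.sum_mul, h]

/-- Generic swap of a weighted double sum. -/
lemma swap_mul {m n : ℕ} (a : Fin m → ℝ) (b : Fin n → Fin m → ℝ) (c : Fin n → ℝ) :
    ∑ j, a j * ∑ i, b i j * c i = ∑ i, c i * ∑ j, b i j * a j := by
  simp only [Finset.mul_sum]
  rw [Finset.sum_comm]
  exact Finset.sum_congr rfl fun i _ => Finset.sum_congr rfl fun j _ => by ring

/-- Key algebraic identity. -/
lemma key_identity {mX mY : ℕ} (U : Fin mX → Fin mY → ℝ)
    (x : Fin mX → Fin mY → ℝ) (y : Fin mY → ℝ) (xs : Fin mX → ℝ) (ys : Fin mY → ℝ)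
    (ustar : ℝ)
    (hxsum : ∀ j, ∑ i, x i j = 1) (hysum : ∑ j, y j = 1)
    (hyssum : ∑ j, ys j = 1)
    (hNx : ∀ j, ∑ i, U i j * xs i = ustar)
    (hNy : ∀ i, ∑ j, U i j * ys j = ustar) :
    (∑ j, ∑ i, (x i j - xs i) * (y j * ∑ j', U i j' * y j'))
      - ∑ j, (y j - ys j) *
        ((∑ i, U i j * ∑ j', x i j' * y j') + ∑ i, x i j * ∑ j', U i j' * y j')
    = -(∑ j, ∑ j', (y j - ys j) * (∑ i, x i j * U i j') * (y j' - ys j')) := by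
  set Uy : Fin mX → ℝ := fun i => ∑ j', U i j' * y j' with hUy
  set XST : Fin mX → ℝ := fun i => ∑ j', x i j' * y j' with hXST
  set h1 : Fin mY → ℝ := fun j => ∑ i, U i j * XST i with hh1
  set h2 : Fin mY → ℝ := fun j => ∑ i, x i j * Uy i with hh2
  have hdy0 : ∑ j, (y j - ys j) = 0 := by
    simp [Finset.sum_sub_distrib, hysum, hyssum]
  have hXST1 : ∑ i, XST i = 1 := by
    rw [hXST]
    rw [Finset.sum_comm]
    have : ∀ j', ∑ i, x i j' * y j' = y j' := by
      intro j'; rw [← Finset.sum_mul, hxsum, one_mul]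
    simp only [this, hysum]
  have F1 : ∑ i, xs i * Uy i = ustar := by
    rw [hUy]
    rw [swap_mul xs (fun j' i => U i j') y]
    simp only [hNx]
    rw [← Finset.sum_mul, hysum, one_mul]
  have F2 : ∑ j, ys j * h1 j = ustar := by
    rw [hh1, swap_mul ys (fun i j => U i j) XST]
    simp only [hNy]
    rw [← Finset.sum_mul, hXST1, one_mul]
  have F3 : ∑ j, y j * h1 j = ∑ j, y j * h2 j := by
    rw [hh1, hh2, swap_mul y (fun i j => U i j) XST, swap_mul y (fun i j => x i j) Uy]
    exact Finset.sum_congr rfl fun i _ => by rw [hUy, hXST]; ring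
  have F4 : (∑ j, ∑ i, (x i j - xs i) * (y j * Uy i)) = ∑ j, y j * h2 j - ustar := by
    have step : ∀ j, ∑ i, (x i j - xs i) * (y j * Uy i) = y j * (h2 j - ustar) := by
      intro j
      have : ∑ i, (x i j - xs i) * (y j * Uy i)
          = y j * ∑ i, (x i j * Uy i - xs i * Uy i) := by
        rw [Finset.mul_sum]; exact Finset.sum_congr rfl fun i _ => by ring
      rw [this, Finset.sum_sub_distrib, F1, hh2]
    simp only [step, mul_sub, Finset.sum_sub_distrib, ← Finset.sum_mul, hysum, one_mul]
  have F5 : (∑ j, ∑ j', (y j - ys j) * (∑ i, x i j * U i j') * (y j' - ys j'))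
      = ∑ j, (y j - ys j) * h2 j := by
    have step : ∀ j, (∑ j', (y j - ys j) * (∑ i, x i j * U i j') * (y j' - ys j'))
        = (y j - ys j) * (h2 j - ustar) := by
      intro j
      have inner : ∑ j', (∑ i, x i j * U i j') * (y j' - ys j') = h2 j - ustar := by
        have e1 : ∀ j', (∑ i, x i j * U i j') * (y j' - ys j')
            = ∑ i, x i j * (U i j' * (y j' - ys j')) := by
          intro j'; rw [Finset.sum_mul]; exact Finset.sum_congr rfl fun i _ => by ring
        simp only [e1]
        rw [Finset.sum_comm]
        have e2 : ∀ i, ∑ j', x i j * (U i j' * (y j' - ys j'))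
            = x i j * (Uy i - ustar) := by
          intro i
          rw [← Finset.mul_sum]
          congr 1
          simp only [mul_sub, Finset.sum_sub_distrib, hNy i, hUy]
        simp only [e2]
        calc ∑ i, x i j * (Uy i - ustar)
            = ∑ i, (x i j * Uy i - x i j * ustar) := by
              exact Finset.sum_congr rfl fun i _ => by ring
          _ = h2 j - ustar := by
              rw [Finset.sum_sub_distrib, ← Finset.sum_mul, hxsum, one_mul, hh2]
      calc ∑ j', (y j - ys j) * (∑ i, x i j * U i j') * (y j' - ys j')
          = (y j - ys j) * ∑ j', (∑ i, x i j * U i j') * (y j' - ys j') := by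
            rw [Finset.mul_sum]; exact Finset.sum_congr rfl fun j' _ => by ring
        _ = (y j - ys j) * (h2 j - ustar) := by rw [inner]
    calc ∑ j, ∑ j', (y j - ys j) * (∑ i, x i j * U i j') * (y j' - ys j')
        = ∑ j, (y j - ys j) * (h2 j - ustar) := Finset.sum_congr rfl fun j _ => step j
      _ = ∑ j, ((y j - ys j) * h2 j - (y j - ys j) * ustar) :=
          Finset.sum_congr rfl fun j _ => by ring
      _ = ∑ j, (y j - ys j) * h2 j := by
          rw [Finset.sum_sub_distrib, ← Finset.sum_mul, hdy0, zero_mul, sub_zero]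
  -- put it together
  have expand : ∀ j, (y j - ys j) * (h1 j + h2 j)
      = y j * h1 j - ys j * h1 j + (y j - ys j) * h2 j := by intro j; ring
  rw [F4, F5]
  calc (∑ j, y j * h2 j - ustar) - ∑ j, (y j - ys j) * (h1 j + h2 j)
      = (∑ j, y j * h2 j - ustar)
        - ((∑ j, y j * h1 j) - (∑ j, ys j * h1 j) + ∑ j, (y j - ys j) * h2 j) := by
        rw [← Finset.sum_sub_distrib, ← Finset.sum_add_distrib]
        congr 1
        exact Finset.sum_congr rfl fun j _ => expand j
    _ = -(∑ j, (y j - ys j) * h2 j) := by rw [F2, F3]; ring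

/-- Along a differentiable trajectory of the gradient descent-ascent
dynamics with an interior Nash equilibrium `(x*, y*)` of value `u*`, the time derivative of
`D₂(X, y) = Σ_j (1/2)‖x_j − x*‖² + (1/2)‖y − y*‖²` equals `−dyᵀ Xᵀ U dy`, where
`dy = y(t) − y*`. -/
theorem stmt_16 (mX mY : ℕ) (U : Fin mX → Fin mY → ℝ)
    (X : ℝ → Fin mX → Fin mY → ℝ) (Y : ℝ → Fin mY → ℝ)
    (hXpos : ∀ t i j, 0 < X t i j) (hYpos : ∀ t j, 0 < Y t j)
    (hXsum : ∀ t j, ∑ i : Fin mX, X t i j = 1) (hYsum : ∀ t, ∑ j : Fin mY, Y t j = 1)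
    -- gradient descent-ascent dynamics of X : ẋ_{i|j} = g_{ij} − (1/m_X) Σ_{i'} g_{i'j},
    -- g_{ij} = y_j Σ_{j'} u_{ij'} y_{j'}
    (hX : ∀ t i j, HasDerivAt (fun s => X s i j)
      ((Y t j * ∑ j' : Fin mY, U i j' * Y t j') -
        (1 / (mX : ℝ)) * ∑ i' : Fin mX, Y t j * ∑ j' : Fin mY, U i' j' * Y t j') t)
    -- gradient descent-ascent dynamics of Y : ẏ_j = −(h_j − (1/m_Y) Σ_{j'} h_{j'}),
    -- h_j = Σ_i u_{ij} x_i^st + Σ_i x_{i|j} Σ_{j'} u_{ij'} y_{j'}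
    (hY : ∀ t j, HasDerivAt (fun s => Y s j)
      (-(((∑ i : Fin mX, U i j * (∑ j' : Fin mY, X t i j' * Y t j')) +
          ∑ i : Fin mX, X t i j * ∑ j' : Fin mY, U i j' * Y t j') -
        (1 / (mY : ℝ)) * ∑ j₂ : Fin mY,
          ((∑ i : Fin mX, U i j₂ * (∑ j' : Fin mY, X t i j' * Y t j')) +
            ∑ i : Fin mX, X t i j₂ * ∑ j' : Fin mY, U i j' * Y t j'))) t)
    -- interior Nash equilibrium (x*, y*) with value u*
    (xs : Fin mX → ℝ) (ys : Fin mY → ℝ) (ustar : ℝ)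
    (hxspos : ∀ i, 0 < xs i) (hxssum : ∑ i : Fin mX, xs i = 1)
    (hyspos : ∀ j, 0 < ys j) (hyssum : ∑ j : Fin mY, ys j = 1)
    (hNx : ∀ j, ∑ i : Fin mX, U i j * xs i = ustar)
    (hNy : ∀ i, ∑ j : Fin mY, U i j * ys j = ustar)
    (t : ℝ) :
    HasDerivAt
      (fun s => (∑ j : Fin mY, (1/2 : ℝ) * ∑ i : Fin mX, (X s i j - xs i)^2) +
        (1/2 : ℝ) * ∑ j : Fin mY, (Y s j - ys j)^2)
      (-(∑ j : Fin mY, ∑ j' : Fin mY,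
        (Y t j - ys j) * (∑ i : Fin mX, X t i j * U i j') * (Y t j' - ys j'))) t := by
  -- derivative of the X-part, column by column
  have hXd : ∀ j : Fin mY, HasDerivAt
      (fun s => (1/2 : ℝ) * ∑ i : Fin mX, (X s i j - xs i)^2)
      (∑ i : Fin mX, (X t i j - xs i) *
        ((Y t j * ∑ j' : Fin mY, U i j' * Y t j') -
          (1 / (mX : ℝ)) * ∑ i' : Fin mX, Y t j * ∑ j' : Fin mY, U i' j' * Y t j')) t := by
    intro j
    have h := (HasDerivAt.fun_sum (fun i (_ : i ∈ Finset.univ) =>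
      (((hX t i j).sub_const (xs i)).fun_pow 2))).const_mul ((1:ℝ)/2)
    refine h.congr_deriv (Eq.symm ?_)
    conv_rhs => rw [Finset.mul_sum]
    refine Finset.sum_congr rfl fun i _ => ?_
    push_cast
    ring
  -- derivative of the Y-part
  have hYd : HasDerivAt (fun s => (1/2 : ℝ) * ∑ j : Fin mY, (Y s j - ys j)^2)
      (∑ j : Fin mY, (Y t j - ys j) *
        (-(((∑ i : Fin mX, U i j * (∑ j' : Fin mY, X t i j' * Y t j')) +
            ∑ i : Fin mX, X t i j * ∑ j' : Fin mY, U i j' * Y t j') -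
          (1 / (mY : ℝ)) * ∑ j₂ : Fin mY,
            ((∑ i : Fin mX, U i j₂ * (∑ j' : Fin mY, X t i j' * Y t j')) +
              ∑ i : Fin mX, X t i j₂ * ∑ j' : Fin mY, U i j' * Y t j')))) t := by
    have h := (HasDerivAt.fun_sum (fun j (_ : j ∈ Finset.univ) =>
      (((hY t j).sub_const (ys j)).fun_pow 2))).const_mul ((1:ℝ)/2)
    refine h.congr_deriv (Eq.symm ?_)
    conv_rhs => rw [Finset.mul_sum]
    refine Finset.sum_congr rfl fun j _ => ?_
    push_cast
    ring
  have hD := (HasDerivAt.fun_sum (fun j (_ : j ∈ Finset.univ) => hXd j)).add hYd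
  -- now rewrite the derivative value
  have hXsum0 : ∀ j, ∑ i : Fin mX, (X t i j - xs i) = 0 := fun j => by
    simp [Finset.sum_sub_distrib, hXsum t j, hxssum]
  have hYsum0 : ∑ j : Fin mY, (Y t j - ys j) = 0 := by
    simp [Finset.sum_sub_distrib, hYsum t, hyssum]
  have e1 : ∀ j, ∑ i : Fin mX, (X t i j - xs i) *
      ((Y t j * ∑ j' : Fin mY, U i j' * Y t j') -
        (1 / (mX : ℝ)) * ∑ i' : Fin mX, Y t j * ∑ j' : Fin mY, U i' j' * Y t j')
      = ∑ i : Fin mX, (X t i j - xs i) * (Y t j * ∑ j' : Fin mY, U i j' * Y t j') := by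
    intro j
    exact sum_mul_sub_const (fun i => X t i j - xs i)
      (fun i => Y t j * ∑ j' : Fin mY, U i j' * Y t j') _ (hXsum0 j)
  have e2 : (∑ j : Fin mY, (Y t j - ys j) *
      (-(((∑ i : Fin mX, U i j * (∑ j' : Fin mY, X t i j' * Y t j')) +
          ∑ i : Fin mX, X t i j * ∑ j' : Fin mY, U i j' * Y t j') -
        (1 / (mY : ℝ)) * ∑ j₂ : Fin mY,
          ((∑ i : Fin mX, U i j₂ * (∑ j' : Fin mY, X t i j' * Y t j')) +
            ∑ i : Fin mX, X t i j₂ * ∑ j' : Fin mY, U i j' * Y t j'))))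
      = -∑ j : Fin mY, (Y t j - ys j) *
          ((∑ i : Fin mX, U i j * (∑ j' : Fin mY, X t i j' * Y t j')) +
            ∑ i : Fin mX, X t i j * ∑ j' : Fin mY, U i j' * Y t j') := by
    have := sum_mul_sub_const (fun j => Y t j - ys j)
      (fun j => (∑ i : Fin mX, U i j * (∑ j' : Fin mY, X t i j' * Y t j')) +
          ∑ i : Fin mX, X t i j * ∑ j' : Fin mY, U i j' * Y t j')
      ((1 / (mY : ℝ)) * ∑ j₂ : Fin mY,
          ((∑ i : Fin mX, U i j₂ * (∑ j' : Fin mY, X t i j' * Y t j')) +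
            ∑ i : Fin mX, X t i j₂ * ∑ j' : Fin mY, U i j' * Y t j')) hYsum0
    calc _ = ∑ j : Fin mY, -((Y t j - ys j) *
          (((∑ i : Fin mX, U i j * (∑ j' : Fin mY, X t i j' * Y t j')) +
            ∑ i : Fin mX, X t i j * ∑ j' : Fin mY, U i j' * Y t j') -
          (1 / (mY : ℝ)) * ∑ j₂ : Fin mY,
            ((∑ i : Fin mX, U i j₂ * (∑ j' : Fin mY, X t i j' * Y t j')) +
              ∑ i : Fin mX, X t i j₂ * ∑ j' : Fin mY, U i j' * Y t j'))) :=
        Finset.sum_congr rfl fun j _ => by ring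
      _ = _ := by rw [Finset.sum_neg_distrib, this]
  have keyeq := key_identity U (X t) (Y t) xs ys ustar (hXsum t) (hYsum t) hyssum hNx hNy
  have final : (∑ j : Fin mY, ∑ i : Fin mX, (X t i j - xs i) *
      ((Y t j * ∑ j' : Fin mY, U i j' * Y t j') -
        (1 / (mX : ℝ)) * ∑ i' : Fin mX, Y t j * ∑ j' : Fin mY, U i' j' * Y t j')) +
      (∑ j : Fin mY, (Y t j - ys j) *
      (-(((∑ i : Fin mX, U i j * (∑ j' : Fin mY, X t i j' * Y t j')) +
          ∑ i : Fin mX, X t i j * ∑ j' : Fin mY, U i j' * Y t j') -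
        (1 / (mY : ℝ)) * ∑ j₂ : Fin mY,
          ((∑ i : Fin mX, U i j₂ * (∑ j' : Fin mY, X t i j' * Y t j')) +
            ∑ i : Fin mX, X t i j₂ * ∑ j' : Fin mY, U i j' * Y t j'))))
      = -(∑ j : Fin mY, ∑ j' : Fin mY,
        (Y t j - ys j) * (∑ i : Fin mX, X t i j * U i j') * (Y t j' - ys j')) := by
    rw [Finset.sum_congr rfl fun j _ => e1 j, e2, ← sub_eq_add_neg]
    exact keyeq
  exact final ▸ hD
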